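/- In the suffix heap of S, maximal-reach pointers are monotone: if i < i' and the maximal-reach pointer of the node labelled i points to the node labelled j, and that of the node labelled i' points to the node labelled j', then j ≤ j'. -/
import Mathlib

private lemma not_lex_of_prefix {α : Type} [LinearOrder α] {A B : List α}
    (h : A <+: B) : ¬ List.Lex (· < ·) B A := by
  obtain ⟨t, rfl⟩ := h
  induction A with
  | nil => intro h; cases h
  | cons a A ih =>
    intro h
    cases h with
    | rel h => exact lt_irrefl a h
    | cons h => exact ih h

private lemma lex_sandwich {α : Type} [LinearOrder α] :
    ∀ (P A B C : List α), P <+: A → P <+: C →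
      List.Lex (· < ·) A B → List.Lex (· < ·) B C → P <+: B := by
  intro P
  induction P with
  | nil => intro A B C _ _ _ _; exact List.nil_prefix
  | cons p P ih =>
    intro A B C hA hC hAB hBC
    obtain ⟨tA, rfl⟩ := hA
    obtain ⟨tC, rfl⟩ := hC
    cases B with
    | nil => cases hAB
    | cons b B =>
      simp only [List.cons_append] at hAB hBC
      have hpb : p = b := by
        cases hAB with
        | rel h1 =>
          cases hBC with
          | rel h2 => exact absurd (h1.trans h2) (lt_irrefl p)
          | cons h2 => exact absurd h1 (lt_irrefl p)
        | cons h1 => rfl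
      subst hpb
      cases hAB with
      | rel h1 => exact absurd h1 (lt_irrefl p)
      | cons h1 =>
        cases hBC with
        | rel h2 => exact absurd h2 (lt_irrefl p)
        | cons h2 =>
          exact List.cons_prefix_cons.mpr ⟨rfl,
            ih (P ++ tA) B (P ++ tC) (List.prefix_append P tA)
              (List.prefix_append P tC) h1 h2⟩

/-- In the suffix heap of `S` (a trie on `n + 1` nodes whose
node of label `i` — equal to its pre-order rank — has path label a prefix of
the lexicographically `i`-th suffix `S[SA(i)..n]`), maximal-reach pointers are
monotone: if `i < i'`, the maximal-reach pointer of the node labelled `i`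
points to the node labelled `j`, and that of the node labelled `i'` points to
the node labelled `j'`, then `j ≤ j'`.  (The maximal reach of node `i` is the
deepest node whose path label is a prefix of `S[SA(i)..n]`.) -/
theorem suffixHeap_maximalReach_monotone
    {α : Type} [LinearOrder α]
    (S T : List α) (c : α) (hS : S = T ++ [c]) (hc : c ∉ T)
    (SA : ℕ → ℕ)
    (hSA : Set.BijOn SA (Set.Icc 1 S.length) (Set.Icc 1 S.length))
    (hSAsorted : ∀ i j : ℕ, 1 ≤ i → i < j → j ≤ S.length →
      List.Lex (· < ·) (S.drop (SA i - 1)) (S.drop (SA j - 1)))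
    (nodes : Finset (List α)) (nodeOf : ℕ → List α)
    (hpc : ∀ p ∈ nodes, ∀ q : List α, q <+: p → q ∈ nodes)
    (hbij : Set.BijOn nodeOf (Set.Iic S.length) ↑nodes)
    (hroot : nodeOf 0 = ([] : List α))
    -- labels equal pre-order ranks: the pre-order (lexicographic-with-prefix)
    -- order of the nodes agrees with the order of their labels
    (hrank : ∀ i j : ℕ, i ≤ S.length → j ≤ S.length → i < j → nodeOf i < nodeOf j)
    (hpath : ∀ i : ℕ, 1 ≤ i → i ≤ S.length → nodeOf i <+: S.drop (SA i - 1)) :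
    ∀ i i' j j' : ℕ, 1 ≤ i → i < i' → i' ≤ S.length → j ≤ S.length → j' ≤ S.length →
      -- `nodeOf j` is the maximal reach of the node labelled `i`
      (nodeOf j <+: S.drop (SA i - 1)) →
      (∀ k ≤ S.length, nodeOf k <+: S.drop (SA i - 1) →
        (nodeOf k).length ≤ (nodeOf j).length) →
      -- `nodeOf j'` is the maximal reach of the node labelled `i'`
      (nodeOf j' <+: S.drop (SA i' - 1)) →
      (∀ k ≤ S.length, nodeOf k <+: S.drop (SA i' - 1) →
        (nodeOf k).length ≤ (nodeOf j').length) →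
      j ≤ j' := by
  intro i i' j j' hi hii' hi'n hjn hj'n hji hjmax hj'i' hj'max
  -- from a prefix relation between node labels, recover label order
  have reflect : ∀ a b : ℕ, a ≤ S.length → b ≤ S.length → nodeOf a <+: nodeOf b → a ≤ b := by
    intro a b ha hb hpre
    by_contra h
    push_neg at h
    have hlt := hrank b a hb ha h
    exact not_lex_of_prefix hpre hlt
  have h1i' : 1 ≤ i' := le_of_lt (lt_of_le_of_lt hi hii')
  by_cases hcase : i' ≤ j
  · -- `nodeOf j` is a prefix of the `i'`-th suffix by the sandwich argument
    have hjpre : nodeOf j <+: S.drop (SA i' - 1) := by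
      rcases eq_or_lt_of_le hcase with h | h
      · rw [← h]; exact hpath i' h1i' hi'n
      · exact lex_sandwich (nodeOf j) (S.drop (SA i - 1)) (S.drop (SA i' - 1))
          (S.drop (SA j - 1)) hji (hpath j (h1i'.trans hcase) hjn)
          (hSAsorted i i' hi hii' hi'n) (hSAsorted i' j h1i' h hjn)
    have hlen := hj'max j hjn hjpre
    exact reflect j j' hjn hj'n (List.prefix_of_prefix_length_le hjpre hj'i' hlen)
  · -- here `j < i'`, and the maximal reach of `i'` has label `≥ i'`
    push_neg at hcase
    have hi'pre := hpath i' h1i' hi'n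
    have hlen := hj'max i' hi'n hi'pre
    have : i' ≤ j' := reflect i' j' hi'n hj'n
      (List.prefix_of_prefix_length_le hi'pre hj'i' hlen)
    omega
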